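/- (Energy dissipation of the stabilized generalized-SAV scheme.) For any stabilizing constant κ > 0, any time step τ > 0, any initial grid function u_init, and every n ≥ 0, the matrix I + τ L_κⁿ is invertible and the iterates of the stabilized generalized-SAV scheme satisfy 𝓔_h(u^{n+1}, s^{n+1}) ≤ 𝓔_h(uⁿ, sⁿ). -/

import Mathlib

open scoped BigOperators
noncomputable section

/-- Grid functions on the `M × M` periodic mesh, identified with vectors in `ℝ^{M²}`.
The sup norm of this Pi type is the discrete `L^∞` (maximum) norm. -/
abbrev GridFun (M : ℕ) : Type := Fin M × Fin M → ℝ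

/-- Discrete inner product `⟨v,w⟩ = h² Σ_{i,j} v_{ij} w_{ij}`. -/
def gridInner (M : ℕ) (h : ℝ) (v w : GridFun M) : ℝ :=
  h ^ 2 * ∑ p : Fin M × Fin M, v p * w p

/-- Discrete `L²` norm `‖v‖ = ⟨v,v⟩^{1/2}`. -/
def gridNorm (M : ℕ) (h : ℝ) (v : GridFun M) : ℝ :=
  Real.sqrt (gridInner M h v v)

/-- The discrete Laplacian as a linear map (periodic indexing via `Fin M` arithmetic). -/
def dLapL (M : ℕ) [NeZero M] (h : ℝ) : GridFun M →ₗ[ℝ] GridFun M where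
  toFun v := fun p =>
    (v (p.1 + 1, p.2) + v (p.1 - 1, p.2) + v (p.1, p.2 + 1) + v (p.1, p.2 - 1) - 4 * v p) / h ^ 2
  map_add' v w := by funext p; simp only [Pi.add_apply]; ring
  map_smul' c v := by funext p; simp only [Pi.smul_apply, smul_eq_mul, RingHom.id_apply]; ring

/-- The discrete Laplacian `Δ_h` as a continuous linear map on `ℝ^{M²}`. -/
def dLap (M : ℕ) [NeZero M] (h : ℝ) : GridFun M →L[ℝ] GridFun M :=
  LinearMap.toContinuousLinearMap (dLapL M h)

/-- Bulk energy `E_{1h}(v) = h² Σ F(v_{ij})`. -/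
def E1h (M : ℕ) (h : ℝ) (F : ℝ → ℝ) (v : GridFun M) : ℝ :=
  h ^ 2 * ∑ p : Fin M × Fin M, F (v p)

/-- Discrete gradient energy `(ε²/2) ‖∇_h v‖²`. -/
def gradE (M : ℕ) [NeZero M] (h ε : ℝ) (v : GridFun M) : ℝ :=
  ε ^ 2 / 2 * (h ^ 2 * ∑ p : Fin M × Fin M,
    (((v (p.1 + 1, p.2) - v p) / h) ^ 2 + ((v (p.1, p.2 + 1) - v p) / h) ^ 2))

/-- Modified energy `𝓔_h(v, r) = (ε²/2)‖∇_h v‖² + r`. -/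
def modE (M : ℕ) [NeZero M] (h ε : ℝ) (v : GridFun M) (r : ℝ) : ℝ :=
  gradE M h ε v + r

/-- Discrete energy `E_h(v) = (ε²/2)‖∇_h v‖² + E_{1h}(v)`. -/
def Eh (M : ℕ) [NeZero M] (h ε : ℝ) (F : ℝ → ℝ) (v : GridFun M) : ℝ :=
  gradE M h ε v + E1h M h F v

/-- `g(v, r) = σ(r) / σ(E_{1h}(v))`. -/
def gFun (M : ℕ) (h : ℝ) (F σ : ℝ → ℝ) (v : GridFun M) (r : ℝ) : ℝ :=
  σ r / σ (E1h M h F v)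

/-- The linear operator `L_κ = κ g₀ I − ε² Δ_h`. -/
def Lkappa (M : ℕ) [NeZero M] (h ε κ g0 : ℝ) : GridFun M →L[ℝ] GridFun M :=
  (κ * g0) • (1 : GridFun M →L[ℝ] GridFun M) - ε ^ 2 • dLap M h

/-- The nonlinear operator `N_κ(v, r) = g(v,r) f(v) + κ g₀ v` (with `f` applied entrywise). -/
def Nkappa (M : ℕ) (h κ g0 : ℝ) (f F σ : ℝ → ℝ) (v : GridFun M) (r : ℝ) : GridFun M :=
  fun p => gFun M h F σ v r * f (v p) + κ * g0 * v p

/-- One step of the GSAV-EI1 scheme. -/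
def EI1step (M : ℕ) [NeZero M] (h ε κ τ : ℝ) (f F σ : ℝ → ℝ) (us : GridFun M × ℝ) :
    GridFun M × ℝ :=
  let g0 := gFun M h F σ us.1 us.2
  let Lk := Lkappa M h ε κ g0
  let u1 := (NormedSpace.exp (-(τ • Lk))) us.1
    + (∫ θ in (0:ℝ)..τ, NormedSpace.exp (-((τ - θ) • Lk))) (Nkappa M h κ g0 f F σ us.1 us.2)
  (u1, us.2 - g0 * gridInner M h (fun p => f (us.1 p)) (u1 - us.1))

/-- The GSAV-EI1 iterates `(uⁿ, sⁿ)`. -/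
def EI1 (M : ℕ) [NeZero M] (h ε κ τ : ℝ) (f F σ : ℝ → ℝ) (uinit : GridFun M) :
    ℕ → GridFun M × ℝ
  | 0 => (uinit, E1h M h F uinit)
  | n + 1 => EI1step M h ε κ τ f F σ (EI1 M h ε κ τ f F σ uinit n)

/-- The midpoint values `(ũ^{n+1/2}, s̃^{n+1/2})` of the GSAV-EI2 scheme, as a function of
`(uⁿ, sⁿ)`; the prediction `(ũ^{n+1}, s̃^{n+1})` is a GSAV-EI1 step. -/
def EI2half (M : ℕ) [NeZero M] (h ε κ τ : ℝ) (f F σ : ℝ → ℝ) (us : GridFun M × ℝ) :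
    GridFun M × ℝ :=
  let t := EI1step M h ε κ τ f F σ us
  ((1 / 2 : ℝ) • (us.1 + t.1), (us.2 + t.2) / 2)

/-- One step of the GSAV-EI2 scheme. -/
def EI2step (M : ℕ) [NeZero M] (h ε κ τ : ℝ) (f F σ : ℝ → ℝ) (us : GridFun M × ℝ) :
    GridFun M × ℝ :=
  let t := EI1step M h ε κ τ f F σ us
  let m := EI2half M h ε κ τ f F σ us
  let gh := gFun M h F σ m.1 m.2
  let Lk := Lkappa M h ε κ gh
  let u1 := (NormedSpace.exp (-(τ • Lk))) us.1
    + (∫ θ in (0:ℝ)..τ, NormedSpace.exp (-((τ - θ) • Lk))) (Nkappa M h κ gh f F σ m.1 m.2)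
  (u1, us.2 - gh * gridInner M h (fun p => f (m.1 p)) (u1 - us.1)
        + κ / 2 * gh * gridInner M h (u1 - t.1) (u1 - us.1))

/-- The GSAV-EI2 iterates `(uⁿ, sⁿ)`. -/
def EI2 (M : ℕ) [NeZero M] (h ε κ τ : ℝ) (f F σ : ℝ → ℝ) (uinit : GridFun M) :
    ℕ → GridFun M × ℝ
  | 0 => (uinit, E1h M h F uinit)
  | n + 1 => EI2step M h ε κ τ f F σ (EI2 M h ε κ τ f F σ uinit n)

/-- One step of the stabilized generalized-SAV scheme (GSAV-EI1 with `e^{−τL}` replaced by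
`(I + τL)^{−1}`). -/
def SAV1step (M : ℕ) [NeZero M] (h ε κ τ : ℝ) (f F σ : ℝ → ℝ) (us : GridFun M × ℝ) :
    GridFun M × ℝ :=
  let g0 := gFun M h F σ us.1 us.2
  let Lk := Lkappa M h ε κ g0
  let u1 := (Ring.inverse ((1 : GridFun M →L[ℝ] GridFun M) + τ • Lk))
      (us.1 + τ • Nkappa M h κ g0 f F σ us.1 us.2)
  (u1, us.2 - g0 * gridInner M h (fun p => f (us.1 p)) (u1 - us.1))

/-- The stabilized generalized-SAV iterates `(uⁿ, sⁿ)`. -/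
def SAV1 (M : ℕ) [NeZero M] (h ε κ τ : ℝ) (f F σ : ℝ → ℝ) (uinit : GridFun M) :
    ℕ → GridFun M × ℝ
  | 0 => (uinit, E1h M h F uinit)
  | n + 1 => SAV1step M h ε κ τ f F σ (SAV1 M h ε κ τ f F σ uinit n)


/-! ### Auxiliary lemmas -/

section Aux

variable {M : ℕ} [NeZero M]

/-- Bilinear form associated with the discrete gradient (without the `h` factors). -/
def Ip (M : ℕ) [NeZero M] (v w : GridFun M) : ℝ :=
  ∑ p : Fin M × Fin M,
    ((v (p.1 + 1, p.2) - v p) * (w (p.1 + 1, p.2) - w p)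
      + (v (p.1, p.2 + 1) - v p) * (w (p.1, p.2 + 1) - w p))

lemma shiftsum1 (G : Fin M × Fin M → ℝ) :
    (∑ p : Fin M × Fin M, G (p.1 + 1, p.2)) = ∑ p, G p := by
  apply Fintype.sum_equiv (Equiv.prodCongr (Equiv.addRight (1 : Fin M)) (Equiv.refl (Fin M)))
  intro p; rfl

lemma shiftsum2 (G : Fin M × Fin M → ℝ) :
    (∑ p : Fin M × Fin M, G (p.1, p.2 + 1)) = ∑ p, G p := by
  apply Fintype.sum_equiv (Equiv.prodCongr (Equiv.refl (Fin M)) (Equiv.addRight (1 : Fin M)))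
  intro p; rfl

lemma dLap_apply (h : ℝ) (v : GridFun M) (p : Fin M × Fin M) :
    dLap M h v p =
      (v (p.1 + 1, p.2) + v (p.1 - 1, p.2) + v (p.1, p.2 + 1) + v (p.1, p.2 - 1) - 4 * v p)
        / h ^ 2 := rfl

lemma Ip_lap (v w : GridFun M) :
    Ip M v w = - ∑ p : Fin M × Fin M,
      (v (p.1 + 1, p.2) + v (p.1 - 1, p.2) + v (p.1, p.2 + 1) + v (p.1, p.2 - 1) - 4 * v p)
        * w p := by
  have h1 : (∑ p : Fin M × Fin M, v (p.1 + 1, p.2) * w (p.1 + 1, p.2))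
      = ∑ p : Fin M × Fin M, v p * w p := shiftsum1 (fun q => v q * w q)
  have h2 : (∑ p : Fin M × Fin M, v (p.1, p.2 + 1) * w (p.1, p.2 + 1))
      = ∑ p : Fin M × Fin M, v p * w p := shiftsum2 (fun q => v q * w q)
  have h3 : (∑ p : Fin M × Fin M, v p * w (p.1 + 1, p.2))
      = ∑ p : Fin M × Fin M, v (p.1 - 1, p.2) * w p := by
    have := shiftsum1 (M := M) (fun q => v (q.1 - 1, q.2) * w q)
    simpa [add_sub_cancel_right] using this
  have h4 : (∑ p : Fin M × Fin M, v p * w (p.1, p.2 + 1))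
      = ∑ p : Fin M × Fin M, v (p.1, p.2 - 1) * w p := by
    have := shiftsum2 (M := M) (fun q => v (q.1, q.2 - 1) * w q)
    simpa [add_sub_cancel_right] using this
  have eL : Ip M v w = ∑ p : Fin M × Fin M,
      (v (p.1 + 1, p.2) * w (p.1 + 1, p.2) + v (p.1, p.2 + 1) * w (p.1, p.2 + 1)
        + (v p * w p + v p * w p)
        - (v (p.1 + 1, p.2) * w p + v p * w (p.1 + 1, p.2)
          + (v (p.1, p.2 + 1) * w p + v p * w (p.1, p.2 + 1)))) :=
    Finset.sum_congr rfl fun p _ => by ring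
  have eR : (∑ p : Fin M × Fin M,
      (v (p.1 + 1, p.2) + v (p.1 - 1, p.2) + v (p.1, p.2 + 1) + v (p.1, p.2 - 1) - 4 * v p)
        * w p)
      = ∑ p : Fin M × Fin M,
        (v (p.1 + 1, p.2) * w p + v (p.1 - 1, p.2) * w p
          + (v (p.1, p.2 + 1) * w p + v (p.1, p.2 - 1) * w p)
          - (v p * w p + v p * w p + (v p * w p + v p * w p))) :=
    Finset.sum_congr rfl fun p _ => by ring
  rw [eL, eR]
  simp only [Finset.sum_sub_distrib, Finset.sum_add_distrib]
  rw [h1, h2, h3, h4]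
  ring

lemma inner_lap (h : ℝ) (hh : h ≠ 0) (v w : GridFun M) :
    gridInner M h (dLap M h v) w = - Ip M v w := by
  have step : gridInner M h (dLap M h v) w = ∑ p : Fin M × Fin M,
      (v (p.1 + 1, p.2) + v (p.1 - 1, p.2) + v (p.1, p.2 + 1) + v (p.1, p.2 - 1) - 4 * v p)
        * w p := by
    unfold gridInner
    rw [Finset.mul_sum]
    refine Finset.sum_congr rfl (fun p _ => ?_)
    rw [dLap_apply]
    field_simp
  rw [step, Ip_lap]
  ring

lemma Ip_self_nonneg (v : GridFun M) : 0 ≤ Ip M v v :=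
  Finset.sum_nonneg fun p _ => add_nonneg (mul_self_nonneg _) (mul_self_nonneg _)

lemma gridInner_self_nonneg (h : ℝ) (v : GridFun M) : 0 ≤ gridInner M h v v := by
  unfold gridInner
  have : (0:ℝ) ≤ ∑ p : Fin M × Fin M, v p * v p :=
    Finset.sum_nonneg fun p _ => mul_self_nonneg _
  exact mul_nonneg (by positivity) this

lemma gridInner_self_eq_zero (h : ℝ) (hh : h ≠ 0) (v : GridFun M)
    (hv : gridInner M h v v = 0) : v = 0 := by
  unfold gridInner at hv
  have h2 : (0:ℝ) < h ^ 2 := by positivity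
  have hsum : (∑ p : Fin M × Fin M, v p * v p) = 0 := by
    rcases mul_eq_zero.mp hv with h' | h'
    · exact absurd h' (ne_of_gt h2)
    · exact h'
  funext p
  have := (Finset.sum_eq_zero_iff_of_nonneg (fun p _ => mul_self_nonneg (v p))).mp hsum p
    (Finset.mem_univ p)
  have : v p * v p = 0 := this
  simpa [mul_self_eq_zero] using this

lemma gradE_eq (h ε : ℝ) (hh : h ≠ 0) (v : GridFun M) :
    gradE M h ε v = ε ^ 2 / 2 * Ip M v v := by
  unfold gradE Ip
  rw [Finset.mul_sum]
  rw [show (ε ^ 2 / 2 * ∑ p : Fin M × Fin M, h ^ 2 *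
      (((v (p.1 + 1, p.2) - v p) / h) ^ 2 + ((v (p.1, p.2 + 1) - v p) / h) ^ 2))
    = ∑ p : Fin M × Fin M, ε ^ 2 / 2 * (h ^ 2 *
      (((v (p.1 + 1, p.2) - v p) / h) ^ 2 + ((v (p.1, p.2 + 1) - v p) / h) ^ 2))
    from Finset.mul_sum _ _ _, Finset.mul_sum]
  refine Finset.sum_congr rfl (fun p _ => ?_)
  congr 1
  field_simp

end Aux


lemma step_lemma (M : ℕ) [NeZero M] (h ε : ℝ) (hh0 : 0 < h) (f F σ : ℝ → ℝ)
    (hσpos : ∀ x, 0 < σ x) (κ τ : ℝ) (hκ : 0 < κ) (hτ : 0 < τ) (u0 : GridFun M) (s0 : ℝ) :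
    IsUnit ((1 : GridFun M →L[ℝ] GridFun M) + τ • Lkappa M h ε κ (gFun M h F σ u0 s0)) ∧
    modE M h ε (SAV1step M h ε κ τ f F σ (u0, s0)).1 (SAV1step M h ε κ τ f F σ (u0, s0)).2
      ≤ modE M h ε u0 s0 := by
  have hh' : h ≠ 0 := ne_of_gt hh0
  set g0 := gFun M h F σ u0 s0 with hg0
  have hg0pos : 0 < g0 := by
    rw [hg0]; unfold gFun; exact div_pos (hσpos _) (hσpos _)
  set A : GridFun M →L[ℝ] GridFun M := (1 : GridFun M →L[ℝ] GridFun M) + τ • Lkappa M h ε κ g0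
    with hA
  have hAp : ∀ (v : GridFun M) (p : Fin M × Fin M),
      A v p = v p + τ * (κ * g0 * v p - ε ^ 2 * dLap M h v p) := by
    intro v p
    simp only [hA, ContinuousLinearMap.add_apply, ContinuousLinearMap.smul_apply,
      ContinuousLinearMap.one_apply, Lkappa, ContinuousLinearMap.sub_apply,
      Pi.add_apply, Pi.smul_apply, Pi.sub_apply, smul_eq_mul]
  have innerA : ∀ v : GridFun M, gridInner M h (A v) v
      = (1 + τ * κ * g0) * gridInner M h v v + τ * ε ^ 2 * Ip M v v := by
    intro v
    have hlap := inner_lap (M := M) h hh' v v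
    unfold gridInner at hlap ⊢
    rw [show (∑ p : Fin M × Fin M, A v p * v p)
        = ∑ p : Fin M × Fin M,
          ((1 + τ * κ * g0) * (v p * v p) - τ * ε ^ 2 * (dLap M h v p * v p)) from
      Finset.sum_congr rfl fun p _ => by rw [hAp]; ring]
    rw [Finset.sum_sub_distrib, ← Finset.mul_sum, ← Finset.mul_sum]
    linear_combination (-(τ * ε ^ 2)) * hlap
  have hinj : Function.Injective A := by
    intro x y hxy
    have hz : A (x - y) = 0 := by rw [map_sub, hxy, sub_self]
    have h0 : gridInner M h (A (x - y)) (x - y) = 0 := by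
      rw [hz]; unfold gridInner; simp
    rw [innerA] at h0
    have hX := gridInner_self_nonneg (M := M) h (x - y)
    have hY := Ip_self_nonneg (M := M) (x - y)
    have hc : (0:ℝ) < 1 + τ * κ * g0 := by positivity
    have hXz : gridInner M h (x - y) (x - y) = 0 := by
      by_contra hne
      have hXpos : 0 < gridInner M h (x - y) (x - y) := lt_of_le_of_ne hX (Ne.symm hne)
      nlinarith [mul_pos hc hXpos, mul_nonneg (mul_nonneg hτ.le (sq_nonneg ε)) hY]
    have := gridInner_self_eq_zero (M := M) h hh' _ hXz
    exact sub_eq_zero.mp this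
  have hbij : Function.Bijective A := by
    refine ⟨hinj, ?_⟩
    exact (LinearMap.injective_iff_surjective
      (f := (A : GridFun M →ₗ[ℝ] GridFun M))).mp hinj
  let e : GridFun M ≃L[ℝ] GridFun M :=
    (LinearEquiv.ofBijective (A : GridFun M →ₗ[ℝ] GridFun M) hbij).toContinuousLinearEquiv
  have he : ∀ x, e x = A x := fun x => rfl
  have hsymm : ∀ x, A (e.symm x) = x := fun x => by rw [← he]; exact e.apply_symm_apply x
  have hAunit : IsUnit A := by
    refine isUnit_iff_exists.mpr ⟨(e.symm : GridFun M →L[ℝ] GridFun M), ?_, ?_⟩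
    · ext x
      simp [ContinuousLinearMap.mul_apply, hsymm]
    · ext x
      have h1 : e.symm (A x) = e.symm (e x) := by rw [he]
      simp [ContinuousLinearMap.mul_apply, h1]
  refine ⟨hAunit, ?_⟩
  have hsav : (SAV1step M h ε κ τ f F σ (u0, s0)).1
      = Ring.inverse A (u0 + τ • Nkappa M h κ g0 f F σ u0 s0) := rfl
  set u1 := (SAV1step M h ε κ τ f F σ (u0, s0)).1 with hu1
  have hAu1 : A u1 = u0 + τ • Nkappa M h κ g0 f F σ u0 s0 := by
    rw [hsav]
    have h1 : A (Ring.inverse A (u0 + τ • Nkappa M h κ g0 f F σ u0 s0))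
        = (A * Ring.inverse A) (u0 + τ • Nkappa M h κ g0 f F σ u0 s0) := rfl
    rw [h1, Ring.mul_inverse_cancel A hAunit]
    rfl
  set δ : GridFun M := u1 - u0 with hδ
  have hs1 : (SAV1step M h ε κ τ f F σ (u0, s0)).2
      = s0 - g0 * gridInner M h (fun p => f (u0 p)) δ := rfl
  have hpt : ∀ p : Fin M × Fin M,
      ε ^ 2 * dLap M h u1 p = (1/τ + κ * g0) * δ p - g0 * f (u0 p) := by
    intro p
    have h1 : A u1 p = u0 p + τ * (g0 * f (u0 p) + κ * g0 * u0 p) := by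
      rw [hAu1]
      simp [Nkappa, Pi.add_apply, Pi.smul_apply, smul_eq_mul]
      exact Or.inl (Or.inl rfl)
    rw [hAp] at h1
    have hδp : δ p = u1 p - u0 p := rfl
    have hτ' : τ ≠ 0 := ne_of_gt hτ
    rw [hδp]
    field_simp
    linear_combination -h1
  have hkey : ε ^ 2 * Ip M u1 δ
      = g0 * gridInner M h (fun p => f (u0 p)) δ
        - (1/τ + κ * g0) * gridInner M h δ δ := by
    have hlap := inner_lap (M := M) h hh' u1 δ
    unfold gridInner at hlap ⊢
    have hIp : Ip M u1 δ = -(h ^ 2 * ∑ p : Fin M × Fin M, dLap M h u1 p * δ p) := by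
      linarith [hlap]
    rw [hIp]
    have e1 : (∑ p : Fin M × Fin M, ε ^ 2 * (dLap M h u1 p * δ p))
        = ∑ p : Fin M × Fin M,
          ((1/τ + κ * g0) * (δ p * δ p) - g0 * (f (u0 p) * δ p)) :=
      Finset.sum_congr rfl fun p _ => by rw [← mul_assoc, hpt p]; ring
    have e2 : ε ^ 2 * (∑ p : Fin M × Fin M, dLap M h u1 p * δ p)
        = (1/τ + κ * g0) * (∑ p : Fin M × Fin M, δ p * δ p)
          - g0 * (∑ p : Fin M × Fin M, f (u0 p) * δ p) :=
      calc ε ^ 2 * (∑ p : Fin M × Fin M, dLap M h u1 p * δ p)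
          = ∑ p : Fin M × Fin M, ε ^ 2 * (dLap M h u1 p * δ p) := Finset.mul_sum _ _ _
        _ = ∑ p : Fin M × Fin M,
            ((1/τ + κ * g0) * (δ p * δ p) - g0 * (f (u0 p) * δ p)) := e1
        _ = (1/τ + κ * g0) * (∑ p : Fin M × Fin M, δ p * δ p)
            - g0 * (∑ p : Fin M × Fin M, f (u0 p) * δ p) := by
          rw [Finset.sum_sub_distrib, ← Finset.mul_sum, ← Finset.mul_sum]
    nlinarith [e2]
  have hIdiff : Ip M u1 u1 - Ip M u0 u0 = 2 * Ip M u1 δ - Ip M δ δ := by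
    have hc : u1 - δ = u0 := sub_sub_cancel u1 u0
    rw [← hc]
    unfold Ip
    simp only [Pi.sub_apply]
    rw [Finset.mul_sum, ← Finset.sum_sub_distrib, ← Finset.sum_sub_distrib]
    exact Finset.sum_congr rfl fun p _ => by ring
  have hXnn := gridInner_self_nonneg (M := M) h δ
  have hYnn := Ip_self_nonneg (M := M) δ
  unfold modE
  rw [hs1, gradE_eq (M := M) h ε hh' u1, gradE_eq (M := M) h ε hh' u0]
  have h5 : 0 ≤ (1/τ + κ * g0) * gridInner M h δ δ := by
    have : (0:ℝ) < 1/τ + κ * g0 := by positivity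
    exact mul_nonneg this.le hXnn
  have h6 : 0 ≤ ε ^ 2 / 2 * Ip M δ δ := mul_nonneg (by positivity) hYnn
  have h7 : ε ^ 2 / 2 * Ip M u1 u1
      = ε ^ 2 / 2 * Ip M u0 u0 + ε ^ 2 * Ip M u1 δ - ε ^ 2 / 2 * Ip M δ δ := by
    linear_combination (ε ^ 2 / 2) * hIdiff
  linarith [h7, hkey, h5, h6]

/-- Energy dissipation of the stabilized generalized-SAV scheme: for any `κ > 0`, `τ > 0`,
initial grid function, and `n ≥ 0`, the matrix `I + τ L_κⁿ` is invertible and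
`𝓔_h(u^{n+1}, s^{n+1}) ≤ 𝓔_h(uⁿ, sⁿ)`. -/
theorem stmt_18 (M : ℕ) [NeZero M] (L h ε : ℝ) (hL : 0 < L) (hh : h = L / M) (hε : 0 < ε)
    (f F σ : ℝ → ℝ) (hF : ∀ x, HasDerivAt F (-f x) x)
    (hσ : ContDiff ℝ 1 σ) (hσpos : ∀ x, 0 < σ x) (hσmono : ∀ x, 0 ≤ deriv σ x)
    (κ : ℝ) (hκ : 0 < κ) (hf : ContDiff ℝ 1 f)
    (τ : ℝ) (hτ : 0 < τ) (uinit : GridFun M) :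
    ∀ n : ℕ,
      IsUnit ((1 : GridFun M →L[ℝ] GridFun M)
          + τ • Lkappa M h ε κ
              (gFun M h F σ (SAV1 M h ε κ τ f F σ uinit n).1 (SAV1 M h ε κ τ f F σ uinit n).2)) ∧
      modE M h ε (SAV1 M h ε κ τ f F σ uinit (n + 1)).1 (SAV1 M h ε κ τ f F σ uinit (n + 1)).2
        ≤ modE M h ε (SAV1 M h ε κ τ f F σ uinit n).1 (SAV1 M h ε κ τ f F σ uinit n).2 := by
  intro n
  have hM : (0:ℝ) < (M:ℝ) := by
    exact_mod_cast Nat.pos_of_ne_zero (NeZero.ne M)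
  have hh0 : 0 < h := by rw [hh]; exact div_pos hL hM
  have := step_lemma M h ε hh0 f F σ hσpos κ τ hκ hτ
    (SAV1 M h ε κ τ f F σ uinit n).1 (SAV1 M h ε κ τ f F σ uinit n).2
  exact this
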